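/- Let Δ be a nonempty quasi-compact subspace of SStar_{f,hp}(R). Then the semistar operation ∧(Δ), defined by E^{∧(Δ)} = ⋂{E^⋆ : ⋆ ∈ Δ} for every nonzero R-submodule E of K, belongs to SStar_{f,hp}(R), i.e. it is a finite type homogeneous preserving semistar operation on R. -/

import Mathlib

open Pointwise

section Instances
variable {A : Type*} {K : Type*} [CommRing A] [Field K] [Algebra A K]
instance : SMulCommClass K A K := SMulCommClass.symm A K K
end Instances

/-- A semistar operation on an integral domain `A` with quotient field `K`: a map on the
nonzero `A`-submodules of `K` satisfying `(xE)^⋆ = xE^⋆`, monotonicity, `E ⊆ E^⋆` and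
idempotency.  (We normalize the irrelevant value at `⊥` by `⊥ ↦ ⊥`.) -/
structure Semistar (A K : Type*) [CommRing A] [Field K] [Algebra A K] where
  toFun : Submodule A K → Submodule A K
  map_bot' : toFun ⊥ = ⊥
  smul' : ∀ x : K, x ≠ 0 → ∀ E : Submodule A K, E ≠ ⊥ → toFun (x • E) = x • toFun E
  mono' : ∀ E F : Submodule A K, E ≠ ⊥ → E ≤ F → toFun E ≤ toFun F
  le' : ∀ E : Submodule A K, E ≠ ⊥ → E ≤ toFun E
  idem' : ∀ E : Submodule A K, E ≠ ⊥ → toFun (toFun E) = toFun E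

section
variable {Γ : Type*} [AddCommMonoid Γ] [LinearOrder Γ]
  [CovariantClass Γ Γ (· + ·) (· < ·)] [Nontrivial Γ]
variable {A : Type*} [CommRing A] [IsDomain A]
variable {K : Type*} [Field K] [Algebra A K] [IsFractionRing A K]
variable (𝒜 : Γ → AddSubgroup A) [GradedRing 𝒜]

/-- `a` is a nonzero homogeneous element of the graded domain `A`. -/
def IsHomog (a : A) : Prop := a ≠ 0 ∧ ∃ γ : Γ, a ∈ 𝒜 γ

/-- `x ∈ K` is a (nonzero) homogeneous element of the homogeneous quotient ring `R_H`. -/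
def IsHomogElem (x : K) : Prop :=
  ∃ a s : A, IsHomog 𝒜 a ∧ IsHomog 𝒜 s ∧ x * algebraMap A K s = algebraMap A K a

/-- `x ∈ K` belongs to the homogeneous quotient ring `R_H`. -/
def MemRH (x : K) : Prop :=
  ∃ a s : A, IsHomog 𝒜 s ∧ x * algebraMap A K s = algebraMap A K a

/-- The image in `K` of an integral ideal of `A`. -/
def idealToK (I : Ideal A) : Submodule A K := Submodule.map (Algebra.linearMap A K) I

/-- `E` is a homogeneous fractional ideal of `A`. -/
def IsHomogFrac (E : Submodule A K) : Prop :=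
  ∃ s : A, IsHomog 𝒜 s ∧ ∃ I : Ideal A, Ideal.IsHomogeneous 𝒜 I ∧
    algebraMap A K s • E = idealToK (K := K) I

/-- `star` is homogeneous preserving. -/
def HomogPres (star : Submodule A K → Submodule A K) : Prop :=
  ∀ E : Submodule A K, E ≠ ⊥ → IsHomogFrac 𝒜 E → IsHomogFrac 𝒜 (star E)

/-- Membership in `E^{⋆_f} = ⋃ {F^⋆ : F nonzero finitely generated, F ⊆ E}`. -/
def MemStarF (star : Submodule A K → Submodule A K) (E : Submodule A K) (x : K) : Prop :=
  ∃ F : Submodule A K, F ≠ ⊥ ∧ F.FG ∧ F ≤ E ∧ x ∈ star F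

/-- `star` is of finite type, i.e. `⋆ = ⋆_f`. -/
def IsFiniteType (star : Submodule A K → Submodule A K) : Prop :=
  ∀ E : Submodule A K, E ≠ ⊥ → ∀ x : K, x ∈ star E ↔ MemStarF star E x

/-- The `A`-submodule `ES` of `K` generated by all products `e * v`, `e ∈ E`, `v ∈ S`. -/
def mulSet (E : Submodule A K) (S : Set K) : Submodule A K :=
  Submodule.span A {z : K | ∃ e ∈ E, ∃ v ∈ S, z = e * v}

/-- `V` is a homogeneous overring of `A`: `R ⊆ V ⊆ R_H` and `V` is generated as an
additive group by its homogeneous elements. -/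
def IsHomogOverring (V : Subring K) : Prop :=
  (∀ a : A, algebraMap A K a ∈ V) ∧ (∀ x ∈ V, MemRH 𝒜 x) ∧
  (∀ v ∈ V, v ∈ AddSubgroup.closure {x : K | x ∈ V ∧ IsHomogElem 𝒜 x})

/-- The order on semistar operations: `σ ≤ τ` iff `E^σ ⊆ E^τ` for every nonzero `E`. -/
def sle (σ τ : Semistar A K) : Prop :=
  ∀ E : Submodule A K, E ≠ ⊥ → σ.toFun E ≤ τ.toFun E

end

section Spaces
variable {Γ : Type*} [AddCommMonoid Γ] [LinearOrder Γ]
  [CovariantClass Γ Γ (· + ·) (· < ·)] [Nontrivial Γ]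
  {A : Type*} [CommRing A] [IsDomain A]
  (K : Type*) [Field K] [Algebra A K] [IsFractionRing A K]
  (𝒜 : Γ → AddSubgroup A) [GradedRing 𝒜]

/-- `SStar_{f,hp}(R)`: the set of finite type homogeneous preserving semistar
operations on `R`. -/
abbrev SStarFHP := {s : Semistar A K // IsFiniteType s.toFun ∧ HomogPres 𝒜 s.toFun}

/-- The Zariski topology on `SStar_{f,hp}(R)`, with subbasic open sets
`V_E = {⋆ : 1 ∈ E^⋆}` for `E` a nonzero `A`-submodule of `K`. -/
instance : TopologicalSpace (SStarFHP K 𝒜) :=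
  TopologicalSpace.generateFrom
    {S : Set (SStarFHP K 𝒜) | ∃ E : Submodule A K, E ≠ ⊥ ∧ S = {s | (1 : K) ∈ s.1.toFun E}}

/-- `SStar_{hp}(R)`: the set of homogeneous preserving semistar operations on `R`. -/
abbrev SStarHP := {s : Semistar A K // HomogPres 𝒜 s.toFun}

/-- The Zariski topology on `SStar_{hp}(R)`. -/
instance : TopologicalSpace (SStarHP K 𝒜) :=
  TopologicalSpace.generateFrom
    {S : Set (SStarHP K 𝒜) | ∃ E : Submodule A K, E ≠ ⊥ ∧ S = {s | (1 : K) ∈ s.1.toFun E}}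

/-- `Over_h(R)`: the set of homogeneous overrings of `R`. -/
abbrev OverH := {T : Subring K // IsHomogOverring 𝒜 T}

/-- The Zariski topology on `Over_h(R)`, with basic open sets `B_F = {T : F ⊆ T}` for `F`
a finite subset of `K`. -/
instance : TopologicalSpace (OverH K 𝒜) :=
  TopologicalSpace.generateFrom
    {S : Set (OverH K 𝒜) | ∃ F : Set K, F.Finite ∧ S = {T | F ⊆ (T.1 : Set K)}}

end Spaces


section AuxSmul
variable {A : Type*} {K : Type*} [CommRing A] [Field K] [Algebra A K]

lemma mem_smul_iff' {x : K} (hx : x ≠ 0) {N : Submodule A K} {y : K} :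
    y ∈ x • N ↔ x⁻¹ * y ∈ N := by
  have hdef : (x • N : Submodule A K) = N.map (DistribMulAction.toLinearMap A K x) := rfl
  rw [hdef, Submodule.mem_map]
  constructor
  · rintro ⟨n, hn, rfl⟩
    simpa [DistribMulAction.toLinearMap, DistribSMul.toLinearMap_apply, smul_eq_mul, inv_mul_cancel_left₀ hx] using hn
  · intro h
    exact ⟨x⁻¹ * y, h, by
      rw [DistribMulAction.toLinearMap, DistribSMul.toLinearMap_apply, smul_eq_mul, mul_inv_cancel_left₀ hx]⟩

lemma smul_ne_bot' {x : K} (hx : x ≠ 0) {N : Submodule A K} (hN : N ≠ ⊥) :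
    x • N ≠ ⊥ := by
  obtain ⟨n, hn, hn0⟩ := (Submodule.ne_bot_iff N).mp hN
  refine (Submodule.ne_bot_iff _).mpr ⟨x * n, ?_, mul_ne_zero hx hn0⟩
  rw [mem_smul_iff' hx, inv_mul_cancel_left₀ hx]
  exact hn

end AuxSmul

section AuxGraded
variable {Γ : Type*} [AddCommMonoid Γ] [LinearOrder Γ]
  [CovariantClass Γ Γ (· + ·) (· < ·)]
variable {A : Type*} [CommRing A] (𝒜 : Γ → AddSubgroup A) [GradedRing 𝒜]

omit [CovariantClass Γ Γ (· + ·) (· < ·)] in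
lemma decompose_coe_sum' {ι' : Type*} (t : Finset ι') (g : ι' → A) (j : Γ) :
    (DirectSum.decompose 𝒜 (∑ i ∈ t, g i) j : A) =
      ∑ i ∈ t, (DirectSum.decompose 𝒜 (g i) j : A) := by
  classical
  induction t using Finset.induction_on with
  | empty => simp
  | insert _ _ h ih =>
    rw [Finset.sum_insert h, Finset.sum_insert h, DirectSum.decompose_add,
      DirectSum.add_apply, AddSubgroup.coe_add, ih]

lemma decompose_smul_left' {s : A} {δ : Γ} (hs : s ∈ 𝒜 δ) (a : A) (γ : Γ) :
    (DirectSum.decompose 𝒜 (s * a) (δ + γ) : A) = s * (DirectSum.decompose 𝒜 a γ : A) := by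
  classical
  have hinj : ∀ {u v : Γ}, δ + u = δ + v → u = v := by
    intro u v h
    rcases lt_trichotomy u v with h' | h' | h'
    · exact absurd h (ne_of_lt (add_lt_add_right h' δ))
    · exact h'
    · exact absurd h.symm (ne_of_lt (add_lt_add_right h' δ))
  conv_lhs => rw [← DirectSum.sum_support_decompose 𝒜 a, Finset.mul_sum]
  rw [decompose_coe_sum']
  have h1 : ∀ γ' ∈ (DirectSum.decompose 𝒜 a).support,
      (DirectSum.decompose 𝒜 (s * (DirectSum.decompose 𝒜 a γ' : A)) (δ + γ) : A)
        = if γ' = γ then s * (DirectSum.decompose 𝒜 a γ' : A) else 0 := by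
    intro γ' _
    by_cases hγ : γ' = γ
    · subst hγ
      rw [if_pos rfl,
        DirectSum.decompose_of_mem_same 𝒜 (SetLike.mul_mem_graded hs (SetLike.coe_mem _))]
    · rw [if_neg hγ,
        DirectSum.decompose_of_mem_ne 𝒜 (SetLike.mul_mem_graded hs (SetLike.coe_mem _))
          (fun h => hγ (hinj h))]
  rw [Finset.sum_congr rfl h1, Finset.sum_ite_eq' _ γ]
  by_cases hγ : γ ∈ (DirectSum.decompose 𝒜 a).support
  · rw [if_pos hγ]
  · rw [if_neg hγ, DFinsupp.notMem_support_iff.mp hγ, ZeroMemClass.coe_zero, mul_zero]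

omit [CovariantClass Γ Γ (· + ·) (· < ·)] in
lemma decompose_mul_mem_ideal' {s : A} {δ : Γ} (hs : s ∈ 𝒜 δ) {L : Ideal A}
    (hL : Ideal.IsHomogeneous 𝒜 L) {b : A} (hb : b ∈ L) (j : Γ) :
    ∃ c ∈ L, (DirectSum.decompose 𝒜 (s * b) j : A) = s * c := by
  classical
  refine ⟨∑ γ ∈ (DirectSum.decompose 𝒜 b).support,
    if j = δ + γ then (DirectSum.decompose 𝒜 b γ : A) else 0, ?_, ?_⟩
  · exact Ideal.sum_mem _ fun γ _ => by split; exacts [hL γ hb, L.zero_mem]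
  · conv_lhs => rw [← DirectSum.sum_support_decompose 𝒜 b, Finset.mul_sum]
    rw [decompose_coe_sum', Finset.mul_sum]
    refine Finset.sum_congr rfl fun γ _ => ?_
    by_cases hj : j = δ + γ
    · rw [if_pos hj, hj,
        DirectSum.decompose_of_mem_same 𝒜 (SetLike.mul_mem_graded hs (SetLike.coe_mem _))]
    · rw [if_neg hj,
        DirectSum.decompose_of_mem_ne 𝒜 (SetLike.mul_mem_graded hs (SetLike.coe_mem _))
          (Ne.symm hj), mul_zero]

end AuxGraded

/-- If `Δ` is a nonempty quasi-compact subspace of `SStar_{f,hp}(R)`,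
then `∧(Δ)`, defined by `E^{∧(Δ)} = ⋂ {E^⋆ : ⋆ ∈ Δ}`, is a finite type homogeneous
preserving semistar operation on `R`, i.e. belongs to `SStar_{f,hp}(R)`. -/
theorem wedge_of_compact_mem_sstarFHP
    {Γ : Type*} [AddCommMonoid Γ] [LinearOrder Γ]
    [CovariantClass Γ Γ (· + ·) (· < ·)] [Nontrivial Γ]
    {A : Type*} [CommRing A] [IsDomain A]
    (K : Type*) [Field K] [Algebra A K] [IsFractionRing A K]
    (𝒜 : Γ → AddSubgroup A) [GradedRing 𝒜]
    (Δ : Set (SStarFHP K 𝒜)) (hne : Δ.Nonempty) (hc : IsCompact Δ) :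
    ∃ t : SStarFHP K 𝒜, ∀ E : Submodule A K, t.1.toFun E = ⨅ s ∈ Δ, s.1.toFun E := by
  classical
  obtain ⟨s₀, hs₀⟩ := hne
  have inj : Function.Injective (algebraMap A K) := IsFractionRing.injective A K
  have memW : ∀ (E : Submodule A K) (x : K),
      x ∈ (⨅ s ∈ Δ, s.1.toFun E) ↔ ∀ s ∈ Δ, x ∈ s.1.toFun E := by
    intro E x; simp [Submodule.mem_iInf]
  have WleS : ∀ (E : Submodule A K), ∀ s ∈ Δ, (⨅ s ∈ Δ, s.1.toFun E) ≤ s.1.toFun E :=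
    fun E s hs => iInf₂_le s hs
  have hle : ∀ (E : Submodule A K), E ≠ ⊥ → E ≤ ⨅ s ∈ Δ, s.1.toFun E :=
    fun E hE => le_iInf₂ fun s hs => s.1.le' E hE
  have hWne : ∀ (E : Submodule A K), E ≠ ⊥ → (⨅ s ∈ Δ, s.1.toFun E) ≠ ⊥ := by
    intro E hE h
    exact hE (le_bot_iff.mp (h ▸ hle E hE))
  have hmono : ∀ (E F : Submodule A K), E ≠ ⊥ → E ≤ F →
      (⨅ s ∈ Δ, s.1.toFun E) ≤ ⨅ s ∈ Δ, s.1.toFun F :=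
    fun E F hE hEF => le_iInf₂ fun s hs => (WleS E s hs).trans (s.1.mono' E F hE hEF)
  refine ⟨⟨⟨fun E => ⨅ s ∈ Δ, s.1.toFun E, ?_, ?_, ?_, ?_, ?_⟩, ?_, ?_⟩, fun E => rfl⟩
  · -- map_bot'
    refine le_antisymm ((iInf₂_le s₀ hs₀).trans ?_) bot_le
    rw [s₀.1.map_bot']
  · -- smul'
    intro x hx E hE
    ext y
    simp only [mem_smul_iff' hx, Submodule.mem_iInf]
    refine forall_congr' fun s => forall_congr' fun hs => ?_
    rw [s.1.smul' x hx E hE, mem_smul_iff' hx]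
  · -- mono'
    exact hmono
  · -- le'
    exact hle
  · -- idem'
    intro E hE
    refine le_antisymm (le_iInf₂ fun s hs => ?_) (hle _ (hWne E hE))
    refine (iInf₂_le s hs).trans ?_
    calc s.1.toFun (⨅ s ∈ Δ, s.1.toFun E) ≤ s.1.toFun (s.1.toFun E) :=
          s.1.mono' _ _ (hWne E hE) (WleS E s hs)
      _ = s.1.toFun E := s.1.idem' E hE
  · -- finite type
    intro E hE x
    constructor
    · intro hx
      obtain ⟨e, heE, he0⟩ := (Submodule.ne_bot_iff E).mp hE
      by_cases hx0 : x = 0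
      · refine ⟨Submodule.span A {e}, ?_, Submodule.fg_span_singleton e,
          (Submodule.span_le).mpr (Set.singleton_subset_iff.mpr heE), ?_⟩
        · simpa [Submodule.span_singleton_eq_bot] using he0
        · subst hx0; exact zero_mem _
      · set U : {F : Submodule A K // F ≠ ⊥ ∧ F.FG ∧ F ≤ E} → Set (SStarFHP K 𝒜) :=
          fun F => {s | (1 : K) ∈ s.1.toFun (x⁻¹ • F.1)} with hU
        have hUopen : ∀ F, IsOpen (U F) := fun F =>
          TopologicalSpace.isOpen_generateFrom_of_mem
            ⟨x⁻¹ • F.1, smul_ne_bot' (inv_ne_zero hx0) F.2.1, rfl⟩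
        have hcover : Δ ⊆ ⋃ F, U F := by
          intro s hs
          obtain ⟨F, hF0, hFG, hFE, hxF⟩ := (s.2.1 E hE x).mp ((memW E x).mp hx s hs)
          refine Set.mem_iUnion.mpr ⟨⟨F, hF0, hFG, hFE⟩, ?_⟩
          show (1 : K) ∈ s.1.toFun (x⁻¹ • F)
          rw [s.1.smul' x⁻¹ (inv_ne_zero hx0) F hF0, mem_smul_iff' (inv_ne_zero hx0),
            inv_inv, mul_one]
          exact hxF
        obtain ⟨t, ht⟩ := hc.elim_finite_subcover U hUopen hcover
        refine ⟨(t.sup fun F => F.1) ⊔ Submodule.span A {e}, ?_, ?_, ?_, ?_⟩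
        · intro h
          have hb : Submodule.span A {e} = ⊥ := le_bot_iff.mp (h ▸ le_sup_right)
          exact he0 (Submodule.span_singleton_eq_bot.mp hb)
        · exact (Submodule.fg_finset_sup t _ fun i _ => i.2.2.1).sup
            (Submodule.fg_span_singleton e)
        · exact sup_le (Finset.sup_le fun i _ => i.2.2.2)
            ((Submodule.span_le).mpr (Set.singleton_subset_iff.mpr heE))
        · rw [memW]
          intro s hs
          obtain ⟨i, hit, hsU⟩ := Set.mem_iUnion₂.mp (ht hs)
          have h1 : (1 : K) ∈ s.1.toFun (x⁻¹ • i.1) := hsU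
          rw [s.1.smul' x⁻¹ (inv_ne_zero hx0) i.1 i.2.1,
            mem_smul_iff' (inv_ne_zero hx0), inv_inv, mul_one] at h1
          exact s.1.mono' i.1 _ i.2.1 ((Finset.le_sup hit).trans le_sup_left) h1
    · rintro ⟨F, hF0, hFG, hFE, hxF⟩
      exact hmono F E hF0 hFE hxF
  · -- homogeneous preserving
    intro E hE hEhom
    obtain ⟨d₀, hd₀, I₀, hI₀, heq₀⟩ := s₀.2.2 E hE hEhom
    have hd₀K : algebraMap A K d₀ ≠ 0 := fun h => hd₀.1 (inj (by rw [h, map_zero]))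
    obtain ⟨δ₀, hδ₀⟩ := hd₀.2
    refine ⟨d₀, hd₀, Submodule.comap (Algebra.linearMap A K)
      (algebraMap A K d₀ • ⨅ s ∈ Δ, s.1.toFun E), ?_, ?_⟩
    · -- the ideal is homogeneous
      intro γ a ha
      rw [Submodule.mem_comap] at ha ⊢
      have ha' : (algebraMap A K d₀)⁻¹ * algebraMap A K a ∈ ⨅ s ∈ Δ, s.1.toFun E :=
        (mem_smul_iff' hd₀K).mp ha
      show algebraMap A K (DirectSum.decompose 𝒜 a γ : A) ∈
        algebraMap A K d₀ • ⨅ s ∈ Δ, s.1.toFun E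
      rw [mem_smul_iff' hd₀K, memW]
      intro τ hτ
      obtain ⟨dτ, hdτ, Iτ, hIτ, heqτ⟩ := τ.2.2 E hE hEhom
      have hdτK : algebraMap A K dτ ≠ 0 := fun h => hdτ.1 (inj (by rw [h, map_zero]))
      obtain ⟨δτ, hδτ⟩ := hdτ.2
      have h1 : algebraMap A K dτ * ((algebraMap A K d₀)⁻¹ * algebraMap A K a)
          ∈ idealToK (K := K) Iτ := by
        rw [← heqτ, mem_smul_iff' hdτK, inv_mul_cancel_left₀ hdτK]
        exact (memW E _).mp ha' τ hτ
      obtain ⟨b, hb, hbeq⟩ := h1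
      have hab : d₀ * b = dτ * a := by
        apply inj
        have hbeq' : algebraMap A K b
            = algebraMap A K dτ * ((algebraMap A K d₀)⁻¹ * algebraMap A K a) := hbeq
        rw [map_mul, map_mul, hbeq']
        field_simp
      obtain ⟨c, hc, hceq⟩ := decompose_mul_mem_ideal' 𝒜 hδ₀ hIτ hb (δτ + γ)
      have h3 : dτ * (DirectSum.decompose 𝒜 a γ : A) = d₀ * c := by
        rw [← decompose_smul_left' 𝒜 hδτ a γ, ← hab, hceq]
      have hc' : algebraMap A K c ∈ algebraMap A K dτ • τ.1.toFun E := by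
        rw [heqτ]; exact ⟨c, hc, rfl⟩
      have hc'' : (algebraMap A K dτ)⁻¹ * algebraMap A K c ∈ τ.1.toFun E :=
        (mem_smul_iff' hdτK).mp hc'
      have key : (algebraMap A K d₀)⁻¹ * algebraMap A K (DirectSum.decompose 𝒜 a γ : A)
          = (algebraMap A K dτ)⁻¹ * algebraMap A K c := by
        have h4 : algebraMap A K dτ * algebraMap A K (DirectSum.decompose 𝒜 a γ : A)
            = algebraMap A K d₀ * algebraMap A K c := by
          rw [← map_mul, ← map_mul, h3]
        field_simp
        linear_combination h4
      rw [key]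
      exact hc''
    · -- the image recovers the scaled module
      rw [idealToK, Submodule.map_comap_eq]
      refine (inf_eq_right.mpr ?_).symm
      intro y hy
      have hy' : y ∈ algebraMap A K d₀ • s₀.1.toFun E := by
        rw [mem_smul_iff' hd₀K] at hy ⊢
        exact WleS E s₀ hs₀ hy
      rw [heq₀] at hy'
      obtain ⟨a, _, haeq⟩ := hy'
      exact ⟨a, haeq⟩
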